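/- Under the setting of the paper's mixture model, if the μ_k are pairwise distinct and 1 − Σ_{k'} max_k π_{k,k'} > 0 (i.e., strictly positive error clustering rate), then the strict inequality Σ_{k'} π̃_{k'} μ̃_{k'}² < Σ_k π_k μ_k² holds. -/

import Mathlib

open Finset

/-- If the error clustering rate is strictly positive (purity `< 1`) and the `μ_k` are
pairwise distinct, then the Jensen-type inequality is strict. -/
theorem stmt_9 (K : ℕ) (hK : 0 < K) (π : Fin K → Fin K → ℝ) (μ : Fin K → ℝ)
    (hnn : ∀ k k', 0 ≤ π k k')
    (hsum : ∑ k, ∑ k', π k k' = 1)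
    (hrow : ∀ k, 0 < ∑ k', π k k')
    (hcol : ∀ k', 0 < ∑ k, π k k')
    (hdist : ∀ k k', k ≠ k' → μ k ≠ μ k')
    (hecr : 0 < 1 - ∑ k', Finset.univ.sup' ⟨⟨0, hK⟩, Finset.mem_univ _⟩
        (fun k => π k k')) :
    ∑ k', (∑ k, π k k') * ((∑ k, π k k' * μ k) / (∑ k, π k k')) ^ 2 <
      ∑ k, (∑ k', π k k') * μ k ^ 2 := by
  have hne : (Finset.univ : Finset (Fin K)).Nonempty := ⟨⟨0, hK⟩, Finset.mem_univ _⟩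
  set m : Fin K → ℝ := fun k' => (∑ k, π k k' * μ k) / (∑ k, π k k') with hm
  set V : Fin K → ℝ := fun k' => ∑ k, π k k' * (μ k - m k') ^ 2 with hV
  have key : ∀ k' : Fin K,
      (∑ k, π k k') * m k' ^ 2 = (∑ k, π k k' * μ k ^ 2) - V k' := by
    intro k'
    have hP : (∑ k, π k k') ≠ 0 := (hcol k').ne'
    have expand : V k' = (∑ k, π k k' * μ k ^ 2)
        - 2 * m k' * (∑ k, π k k' * μ k) + m k' ^ 2 * (∑ k, π k k') := by
      rw [hV]
      have : ∀ k : Fin K, π k k' * (μ k - m k') ^ 2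
          = π k k' * μ k ^ 2 - 2 * m k' * (π k k' * μ k) + m k' ^ 2 * π k k' := by
        intro k; ring
      simp only [this]
      rw [Finset.sum_add_distrib, Finset.sum_sub_distrib, ← Finset.mul_sum,
        ← Finset.mul_sum]
    rw [expand, hm]
    field_simp
    ring
  have Vnn : ∀ k', 0 ≤ V k' := by
    intro k'
    apply Finset.sum_nonneg
    intro k _
    exact mul_nonneg (hnn k k') (sq_nonneg _)
  -- find a column with two positive entries
  have hex : ∃ k' : Fin K, (Finset.univ.sup' hne fun k => π k k') < ∑ k, π k k' := by
    by_contra h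
    push_neg at h
    have : (1 : ℝ) ≤ ∑ k', Finset.univ.sup' hne fun k => π k k' := by
      calc (1:ℝ) = ∑ k, ∑ k', π k k' := hsum.symm
        _ = ∑ k', ∑ k, π k k' := Finset.sum_comm
        _ ≤ ∑ k', Finset.univ.sup' hne fun k => π k k' :=
          Finset.sum_le_sum fun k' _ => h k'
    linarith
  obtain ⟨c, hc⟩ := hex
  obtain ⟨k0, _, hk0⟩ := Finset.exists_mem_eq_sup' hne (fun k => π k c)
  -- there is k1 ≠ k0 with π k1 c > 0
  have hsplit : ∑ k, π k c = π k0 c + ∑ k ∈ Finset.univ.erase k0, π k c := by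
    exact (Finset.add_sum_erase _ (fun k => π k c) (Finset.mem_univ k0)).symm
  have hrest : 0 < ∑ k ∈ Finset.univ.erase k0, π k c := by
    rw [hsplit, ← hk0] at hc; linarith
  obtain ⟨k1, hk1mem, hk1pos⟩ : ∃ k1 ∈ Finset.univ.erase k0, 0 < π k1 c := by
    by_contra h
    push_neg at h
    have : ∑ k ∈ Finset.univ.erase k0, π k c ≤ 0 := by
      apply Finset.sum_nonpos
      intro k hk; exact h k hk
    linarith
  have hk1ne : k1 ≠ k0 := (Finset.mem_erase.mp hk1mem).1
  have hk0pos : 0 < π k0 c := by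
    rw [← hk0]
    exact lt_of_lt_of_le hk1pos (Finset.le_sup' (fun k => π k c) (Finset.mem_univ k1))
  -- V c > 0
  have hVc : 0 < V c := by
    have hμ : μ k1 ≠ μ k0 := hdist k1 k0 hk1ne
    rcases ne_or_eq (μ k0) (m c) with h | h
    · have hterm : 0 < π k0 c * (μ k0 - m c) ^ 2 :=
        mul_pos hk0pos (by apply sq_pos_of_ne_zero; exact sub_ne_zero.mpr h)
      calc (0:ℝ) < π k0 c * (μ k0 - m c) ^ 2 := hterm
        _ ≤ V c := Finset.single_le_sum (f := fun k => π k c * (μ k - m c) ^ 2)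
            (fun k _ => mul_nonneg (hnn k c) (sq_nonneg _)) (Finset.mem_univ k0)
    · have hne1 : μ k1 ≠ m c := by rw [← h]; exact hμ
      have hterm : 0 < π k1 c * (μ k1 - m c) ^ 2 :=
        mul_pos hk1pos (by apply sq_pos_of_ne_zero; exact sub_ne_zero.mpr hne1)
      calc (0:ℝ) < π k1 c * (μ k1 - m c) ^ 2 := hterm
        _ ≤ V c := Finset.single_le_sum (f := fun k => π k c * (μ k - m c) ^ 2)
            (fun k _ => mul_nonneg (hnn k c) (sq_nonneg _)) (Finset.mem_univ k1)
  have hVsum : 0 < ∑ k', V k' :=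
    Finset.sum_pos' (fun k' _ => Vnn k') ⟨c, Finset.mem_univ c, hVc⟩
  have hrhs : ∑ k, (∑ k', π k k') * μ k ^ 2 = ∑ k', ∑ k, π k k' * μ k ^ 2 := by
    rw [Finset.sum_comm]
    apply Finset.sum_congr rfl
    intro k _
    rw [Finset.sum_mul]
  calc ∑ k', (∑ k, π k k') * m k' ^ 2
      = ∑ k', ((∑ k, π k k' * μ k ^ 2) - V k') := by
        exact Finset.sum_congr rfl fun k' _ => key k'
    _ = (∑ k', ∑ k, π k k' * μ k ^ 2) - ∑ k', V k' := Finset.sum_sub_distrib _ _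
    _ < ∑ k', ∑ k, π k k' * μ k ^ 2 := by linarith
    _ = ∑ k, (∑ k', π k k') * μ k ^ 2 := hrhs.symm
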